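/- For every k ≥ 3 and every m > 0, (m-1)[k←k+1] < m[k←k+1], i.e. the hereditary base change operation is strictly monotone. -/

import Mathlib

/-- The parametrized Ackermann function: `A a k b` is `A_a(k,b)`. -/
def A : ℕ → ℕ → ℕ → ℕ
  | 0, _, b => b + 1
  | a+1, k, 0 => (fun x => A a k x)^[k] 0
  | a+1, k, b+1 => (fun x => A a k x)^[k] (A (a+1) k b)
  termination_by a _ b => (a, b)

lemma A_zero (k b : ℕ) : A 0 k b = b + 1 := by simp [A]
lemma A_succ_zero (a k : ℕ) : A (a+1) k 0 = (fun x => A a k x)^[k] 0 := by rw [A]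
lemma A_succ_succ (a k b : ℕ) : A (a+1) k (b+1) = (fun x => A a k x)^[k] (A (a+1) k b) := by rw [A]

/-- iterates of an increasing function grow. -/
lemma iter_add {f : ℕ → ℕ} (hf : ∀ x, x < f x) : ∀ (j x : ℕ), x + j ≤ f^[j] x := by
  intro j
  induction j with
  | zero => simp
  | succ j ih =>
    intro x
    rw [Function.iterate_succ_apply']
    have := hf (f^[j] x)
    have := ih x
    omega

lemma iter_le_self {f : ℕ → ℕ} (hf : ∀ x, x < f x) (j x : ℕ) : x ≤ f^[j] x := by
  have := iter_add hf j x; omega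

lemma iter_le_iter {f g : ℕ → ℕ} (hfg : ∀ x, f x ≤ g x) (hg : Monotone g) :
    ∀ (j x : ℕ), f^[j] x ≤ g^[j] x := by
  intro j
  induction j with
  | zero => simp
  | succ j ih =>
    intro x
    rw [Function.iterate_succ_apply', Function.iterate_succ_apply']
    exact le_trans (hfg _) (hg (ih x))

/-- `f u - u ≤ f v - v` for strict mono `f`, additive form. -/
lemma sub_mono {f : ℕ → ℕ} (hf : StrictMono f) {u v : ℕ} (h : u ≤ v) :
    f u + v ≤ f v + u := by
  induction v, h using Nat.le_induction with
  | base => omega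
  | succ v hv ih =>
    have : f v + 1 ≤ f (v+1) := hf (Nat.lt_succ_self v)
    omega

lemma lt_A {k : ℕ} (hk : 1 ≤ k) : ∀ a b, b < A a k b := by
  intro a
  induction a with
  | zero => intro b; rw [A_zero]; omega
  | succ a ih =>
    intro b
    induction b with
    | zero =>
      rw [A_succ_zero]
      have := iter_add (f := fun x => A a k x) (fun x => ih x) k 0
      omega
    | succ b ihb =>
      rw [A_succ_succ]
      have := iter_add (f := fun x => A a k x) (fun x => ih x) k (A (a+1) k b)
      omega

lemma A_pos {k : ℕ} (hk : 1 ≤ k) (a b : ℕ) : 0 < A a k b :=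
  lt_of_le_of_lt (Nat.zero_le b) (lt_A hk a b)

lemma A_lt_succ_b {k : ℕ} (hk : 1 ≤ k) (a b : ℕ) : A a k b < A a k (b+1) := by
  cases a with
  | zero => rw [A_zero, A_zero]; omega
  | succ a =>
    rw [A_succ_succ]
    have := iter_add (f := fun x => A a k x) (fun x => lt_A hk a x) k (A (a+1) k b)
    omega

lemma A_strictMono_b {k : ℕ} (hk : 1 ≤ k) (a : ℕ) : StrictMono (A a k) :=
  strictMono_nat_of_lt_succ (A_lt_succ_b hk a)

lemma A_mono_b {k : ℕ} (hk : 1 ≤ k) (a : ℕ) {x y : ℕ} (h : x ≤ y) : A a k x ≤ A a k y :=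
  (A_strictMono_b hk a).monotone h

lemma A_lt_succ_a {k : ℕ} (hk : 2 ≤ k) (a b : ℕ) : A a k b < A (a+1) k b := by
  obtain ⟨j, rfl⟩ : ∃ j, k = j + 1 := ⟨k - 1, by omega⟩
  have hk1 : 1 ≤ j + 1 := by omega
  cases b with
  | zero =>
    rw [A_succ_zero, Function.iterate_succ_apply]
    have := iter_add (f := fun x => A a (j+1) x) (fun x => lt_A hk1 a x) j (A a (j+1) 0)
    simpa using by omega
  | succ b =>
    rw [A_succ_succ, Function.iterate_succ_apply]
    have h1 : A a (j+1) (b+1) ≤ A a (j+1) (A (a+1) (j+1) b) :=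
      A_mono_b hk1 a (lt_A hk1 (a+1) b)
    have h2 := iter_add (f := fun x => A a (j+1) x) (fun x => lt_A hk1 a x) j
      (A a (j+1) (A (a+1) (j+1) b))
    omega

lemma A_strictMono_a {k : ℕ} (hk : 2 ≤ k) (b : ℕ) : StrictMono (fun a => A a k b) :=
  strictMono_nat_of_lt_succ (fun a => A_lt_succ_a hk a b)

lemma A_mono_a {k : ℕ} (hk : 2 ≤ k) {a c : ℕ} (h : a ≤ c) (b : ℕ) : A a k b ≤ A c k b :=
  (A_strictMono_a hk b).monotone h

lemma lt_A_a {k : ℕ} (hk : 2 ≤ k) (a : ℕ) : a < A a k 0 := by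
  induction a with
  | zero => rw [A_zero]; omega
  | succ a ih => have := A_lt_succ_a hk a 0; omega

lemma A_le_succ_k {k : ℕ} (hk : 1 ≤ k) : ∀ a b, A a k b ≤ A a (k+1) b := by
  intro a
  induction a with
  | zero => intro b; rw [A_zero, A_zero]
  | succ a ih =>
    have hg : Monotone (fun x => A a (k+1) x) := (A_strictMono_b (by omega) a).monotone
    have hdom : ∀ j x, (fun x => A a k x)^[j] x ≤ (fun x => A a (k+1) x)^[j] x :=
      iter_le_iter (fun x => ih x) hg
    intro b
    induction b with
    | zero =>
      rw [A_succ_zero, A_succ_zero, Function.iterate_succ_apply']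
      refine le_trans (hdom k 0) ?_
      have := lt_A (k := k+1) (by omega) a ((fun x => A a (k+1) x)^[k] 0)
      omega
    | succ b ihb =>
      rw [A_succ_succ, A_succ_succ, Function.iterate_succ_apply']
      refine le_trans (hdom k (A (a+1) k b)) ?_
      refine le_trans ((Monotone.iterate hg k) ihb) ?_
      have := lt_A (k := k+1) (by omega) a ((fun x => A a (k+1) x)^[k] (A (a+1) (k+1) b))
      omega

lemma A_mono_k {a : ℕ} {k K : ℕ} (hk : 1 ≤ k) (h : k ≤ K) (b : ℕ) : A a k b ≤ A a K b := by
  induction K, h using Nat.le_induction with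
  | base => exact le_refl _
  | succ K hK ih => exact le_trans ih (A_le_succ_k (by omega) a b)
-- gap lemmas (appended after t2 content when assembling)
section Gap
variable {k K : ℕ}

/-- consecutive gaps are monotone in b. -/
lemma gap_consec {k : ℕ} (hk : 1 ≤ k) (a b : ℕ) :
    A a k (b+1) + A a k (b+1) ≤ A a k (b+2) + A a k b := by
  cases a with
  | zero => rw [A_zero, A_zero, A_zero]; omega
  | succ a =>
    have hF : StrictMono ((fun x => A a k x)^[k]) :=
      (A_strictMono_b hk a).iterate k
    have hle : A (a+1) k b ≤ A (a+1) k (b+1) := le_of_lt (A_lt_succ_b hk _ _)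
    have := sub_mono hF hle
    rw [A_succ_succ a k (b+1), A_succ_succ a k b] at *
    omega

/-- gap monotone in b. -/
lemma gap_mono_b {k : ℕ} (hk : 1 ≤ k) (a : ℕ) {x y : ℕ} (h : x ≤ y) :
    A a k (x+1) + A a k y ≤ A a k (y+1) + A a k x := by
  induction y, h using Nat.le_induction with
  | base => omega
  | succ y hy ih =>
    have h2 := gap_consec hk a y
    rw [(by omega : y+1+1 = y+2)]
    omega

/-- gap monotone in a, single step. -/
lemma gap_succ_a {k : ℕ} (hk : 1 ≤ k) (a b : ℕ) :
    A a k (b+1) + A (a+1) k b ≤ A (a+1) k (b+1) + A a k b := by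
  obtain ⟨j, rfl⟩ : ∃ j, k = j + 1 := ⟨k - 1, by omega⟩
  have h1 : A a (j+1) (A (a+1) (j+1) b) ≤ A (a+1) (j+1) (b+1) := by
    rw [A_succ_succ, Function.iterate_succ_apply]
    exact iter_le_self (fun x => lt_A hk a x) j _
  have hb1X : b + 1 ≤ A (a+1) (j+1) b := lt_A hk (a+1) b
  have h2 := sub_mono (A_strictMono_b hk a) hb1X
  have h3 : b + 1 ≤ A a (j+1) b := lt_A hk a b
  omega

lemma gap_mono_a {k : ℕ} (hk : 1 ≤ k) {a c : ℕ} (h : a ≤ c) (b : ℕ) :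
    A a k (b+1) + A c k b ≤ A c k (b+1) + A a k b := by
  induction c, h using Nat.le_induction with
  | base => omega
  | succ c hc ih =>
    have := gap_succ_a hk c b
    omega

/-- gap monotone in k, single step. -/
lemma gap_succ_k {k : ℕ} (hk : 1 ≤ k) (a b : ℕ) :
    A a k (b+1) + A a (k+1) b ≤ A a (k+1) (b+1) + A a k b := by
  cases a with
  | zero => simp only [A_zero]; omega
  | succ a =>
    have hXX' : A (a+1) k b ≤ A (a+1) (k+1) b := A_le_succ_k hk (a+1) b
    have hg : Monotone (fun x => A a (k+1) x) := (A_strictMono_b (by omega) a).monotone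
    have hdom : ∀ j x, (fun x => A a k x)^[j] x ≤ (fun x => A a (k+1) x)^[j] x :=
      iter_le_iter (fun x => A_le_succ_k hk a x) hg
    have hG : StrictMono ((fun x => A a (k+1) x)^[k+1]) :=
      (A_strictMono_b (by omega) a).iterate (k+1)
    have h1 : (fun x => A a k x)^[k] (A (a+1) k b) ≤
        (fun x => A a (k+1) x)^[k+1] (A (a+1) k b) := by
      refine le_trans (hdom k _) ?_
      rw [Function.iterate_succ_apply']
      have := lt_A (k := k+1) (by omega) a ((fun x => A a (k+1) x)^[k] (A (a+1) k b))
      omega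
    have h2 := sub_mono hG hXX'
    rw [A_succ_succ a k b, A_succ_succ a (k+1) b]
    omega

lemma gap_mono_k {a k K : ℕ} (hk : 1 ≤ k) (h : k ≤ K) (b : ℕ) :
    A a k (b+1) + A a K b ≤ A a K (b+1) + A a k b := by
  induction K, h using Nat.le_induction with
  | base => omega
  | succ K hK ih =>
    have := gap_succ_k (k := K) (by omega) a b
    omega

/-- master gap lemma. -/
lemma gap_master {k K : ℕ} (hk : 1 ≤ k) (hkK : k ≤ K) {a c x y : ℕ}
    (hac : a ≤ c) (hxy : x ≤ y) :
    A a k (x+1) + A c K y ≤ A c K (y+1) + A a k x := by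
  have h1 := gap_mono_b hk a hxy
  have h2 := gap_mono_a hk hac y
  have h3 := gap_mono_k (a := c) hk hkK y
  omega
end Gap

/-- `m = A_a(k,b) + l` is the `k`-normal form of `m`: `a` is maximal with
`A_a(k,0) ≤ m` and `b` is maximal with `A_a(k,b) ≤ m`. -/
def IsNF (k m a b l : ℕ) : Prop :=
  m = A a k b + l ∧ A a k 0 ≤ m ∧
  (∀ a', A a' k 0 ≤ m → a' ≤ a) ∧
  (∀ b', A a k b' ≤ m → b' ≤ b)

/-- The graph of the hereditary base change operation `m ↦ m[k←k+1]`. -/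
inductive BC (k : ℕ) : ℕ → ℕ → Prop
  | zero : BC k 0 0
  | step {a b l a' b'} :
      IsNF k (A a k b + l) a b l → BC k a a' → BC k b b' →
      BC k (A a k b + l) (A a' (k+1) b' + l)

lemma tower_lt_succ {f : ℕ → ℕ} (hf : ∀ x, x < f x) (j : ℕ) : f^[j] 0 < f^[j+1] 0 := by
  rw [Function.iterate_succ_apply']; exact hf _

lemma tower_strictMono {f : ℕ → ℕ} (hf : ∀ x, x < f x) : StrictMono (fun j => f^[j] 0) :=
  strictMono_nat_of_lt_succ (tower_lt_succ hf)

lemma bc_cases {k m q : ℕ} (h : BC k m q) :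
    (m = 0 ∧ q = 0) ∨ ∃ a b l a' b', m = A a k b + l ∧ q = A a' (k+1) b' + l ∧
      IsNF k m a b l ∧ BC k a a' ∧ BC k b b' := by
  cases h with
  | zero => exact Or.inl ⟨rfl, rfl⟩
  | step hNF ha hb => exact Or.inr ⟨_, _, _, _, _, rfl, rfl, hNF, ha, hb⟩

lemma nf_unique {k m a b l a2 b2 l2 : ℕ} (h1 : IsNF k m a b l) (h2 : IsNF k m a2 b2 l2) :
    a = a2 ∧ b = b2 ∧ l = l2 := by
  obtain ⟨e1, le1, ma1, mb1⟩ := h1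
  obtain ⟨e2, le2, ma2, mb2⟩ := h2
  have haa : a = a2 := le_antisymm (ma2 a le1) (ma1 a2 le2)
  subst haa
  have hbb : b = b2 := le_antisymm (mb2 b (by omega)) (mb1 b2 (by omega))
  subst hbb
  exact ⟨rfl, rfl, by omega⟩

lemma bc_det {k : ℕ} (hk : 1 ≤ k) : ∀ {m p : ℕ}, BC k m p → ∀ {q : ℕ}, BC k m q → p = q := by
  intro m p h1
  induction h1 with
  | zero =>
    intro q h2
    rcases bc_cases h2 with ⟨_, rfl⟩ | ⟨a, b, l, a', b', hm, hqe, hNF2, ha2, hb2⟩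
    · rfl
    · exfalso; have := A_pos hk a b; omega
  | step hNF ha hb iha ihb =>
    rename_i a b l a' b'
    intro q h2
    rcases bc_cases h2 with ⟨hm, rfl⟩ | ⟨a2, b2, l2, a2', b2', hm, hqe, hNF2, ha2, hb2⟩
    · exfalso; have := A_pos hk a b; omega
    · obtain ⟨ea, eb, el⟩ := nf_unique hNF hNF2
      subst ea; subst eb; subst el
      rw [hqe, iha ha2, ihb hb2]

lemma bc_le {k : ℕ} (hk : 1 ≤ k) : ∀ {m p : ℕ}, BC k m p → m ≤ p := by
  intro m p h
  induction h with
  | zero => exact le_refl 0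
  | step hNF ha hb iha ihb =>
    rename_i a b l a' b'
    have h1 : A a k b ≤ A a (k+1) b := A_le_succ_k hk a b
    have h2 : A a (k+1) b ≤ A a' (k+1) b := A_mono_a (by omega) iha b
    have h3 : A a' (k+1) b ≤ A a' (k+1) b' := A_mono_b (by omega) a' ihb
    omega

lemma A_succ_zero' {k : ℕ} (hk : 1 ≤ k) (a : ℕ) :
    A (a+1) k 0 = A a k ((fun x => A a k x)^[k-1] 0) := by
  obtain ⟨i, rfl⟩ : ∃ i, k = i + 1 := ⟨k - 1, by omega⟩
  rw [A_succ_zero, Function.iterate_succ_apply']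
  simp

lemma bc_tower {k a a' : ℕ} (hk : 2 ≤ k) (ha : BC k a a') :
    ∀ j, j ≤ k - 1 → BC k ((fun x => A a k x)^[j] 0) ((fun x => A a' (k+1) x)^[j] 0) := by
  have hk1 : (1:ℕ) ≤ k := by omega
  intro j
  induction j with
  | zero => intro _; simpa using BC.zero
  | succ j ih =>
    intro hj
    have hbc := ih (by omega)
    have hNF : IsNF k (A a k ((fun x => A a k x)^[j] 0) + 0) a ((fun x => A a k x)^[j] 0) 0 := by
      refine ⟨rfl, by have := A_mono_b hk1 a (Nat.zero_le ((fun x => A a k x)^[j] 0)); omega, ?_, ?_⟩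
      · intro a3 h3
        by_contra hcon
        have ha3 : a + 1 ≤ a3 := by omega
        have h4 : A (a+1) k 0 ≤ A a3 k 0 := A_mono_a hk ha3 0
        have h5 : A a k ((fun x => A a k x)^[j] 0) + 0 < A (a+1) k 0 := by
          rw [A_succ_zero]
          have h6 : (fun x => A a k x)^[j+1] 0 < (fun x => A a k x)^[k] 0 :=
            tower_strictMono (fun x => lt_A hk1 a x) (by omega : j + 1 < k)
          rw [Function.iterate_succ_apply'] at h6
          simpa using h6
        omega
      · intro b3 h3
        have := (A_strictMono_b hk1 a).le_iff_le.mp (by omega : A a k b3 ≤ A a k ((fun x => A a k x)^[j] 0))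
        exact this
    have hstep := BC.step hNF ha hbc
    rw [Function.iterate_succ_apply', Function.iterate_succ_apply']
    simpa using hstep
theorem key {k : ℕ} (hk : 3 ≤ k) : ∀ n : ℕ,
    (∀ m, m < n → ∀ p q, BC k m p → BC k n q → p < q) ∧
    (∀ q a b l a' b', BC k n q → IsNF k n a b l → BC k a a' → BC k b b' →
      q = A a' (k+1) b' + l ∧ q < A a' (k+1) (b'+1) ∧ q < A (a'+1) (k+1) 0) := by
  have hk1 : (1:ℕ) ≤ k := by omega
  have hk2 : (2:ℕ) ≤ k := by omega
  intro n
  induction n using Nat.strong_induction_on with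
  | _ n IH =>
  have hM : ∀ m, m < n → ∀ p q, BC k m p → BC k n q → p < q := by
    intro m hmn p q hp hq
    rcases bc_cases hp with ⟨rfl, rfl⟩ | ⟨a, b, l, a', b', rfl, rfl, hNF, ha, hb⟩
    · rcases bc_cases hq with ⟨rfl, rfl⟩ | ⟨a2, b2, l2, a2', b2', rfl, rfl, hNF2, ha2, hb2⟩
      · omega
      · have := A_pos (k := k+1) (by omega) a2' b2'
        omega
    · rcases bc_cases hq with ⟨rfl, rfl⟩ | ⟨a2, b2, l2, a2', b2', rfl, rfl, hNF2, ha2, hb2⟩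
      · omega
      · obtain ⟨-, hP1, hP2⟩ :=
          (IH _ hmn).2 _ a b l a' b' (BC.step hNF ha hb) hNF ha hb
        have haa2 : a ≤ a2 := hNF2.2.2.1 a (le_trans hNF.2.1 (le_of_lt hmn))
        rcases eq_or_lt_of_le haa2 with rfl | halt
        · have hbb2 : b ≤ b2 := hNF2.2.2.2 b (by omega)
          rcases eq_or_lt_of_le hbb2 with rfl | hblt
          · have e1 : a' = a2' := bc_det hk1 ha ha2
            have e2 : b' = b2' := bc_det hk1 hb hb2
            subst e1; subst e2
            omega
          · have hb2n : b2 < A a k b2 + l2 := by have := lt_A hk1 a b2; omega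
            have hbb' : b' < b2' := (IH _ hb2n).1 b hblt b' b2' hb hb2
            have e1 : a' = a2' := bc_det hk1 ha ha2
            subst e1
            have h8 : A a' (k+1) (b'+1) ≤ A a' (k+1) b2' := A_mono_b (by omega) a' (by omega)
            omega
        · have ha2n : a2 < A a2 k b2 + l2 := by
            have h9 := lt_A_a hk2 a2
            have h10 : A a2 k 0 ≤ A a2 k b2 := A_mono_b hk1 a2 (Nat.zero_le b2)
            omega
          have haa' : a' < a2' := (IH _ ha2n).1 a halt a' a2' ha ha2
          have h11 : A (a'+1) (k+1) 0 ≤ A a2' (k+1) 0 := A_mono_a (by omega) (by omega) 0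
          have h12 : A a2' (k+1) 0 ≤ A a2' (k+1) b2' := A_mono_b (by omega) a2' (Nat.zero_le b2')
          omega
  refine ⟨hM, ?_⟩
  intro q a b l a' b' hq hNF ha hb
  rcases bc_cases hq with ⟨hn0, rfl⟩ | ⟨a2, b2, l2, a2', b2', hm, rfl, hNF2, ha2, hb2⟩
  · exfalso
    have h1 := A_pos hk1 a b
    have h2 := hNF.1
    omega
  · subst hm
    obtain ⟨ea, eb, el⟩ := nf_unique hNF hNF2
    subst ea; subst eb; subst el
    have e1 : a' = a2' := bc_det hk1 ha ha2
    have e2 : b' = b2' := bc_det hk1 hb hb2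
    subst e1; subst e2
    have hgap : A a k b + l + 1 ≤ A a k (b+1) := by
      by_contra hcon
      have := hNF.2.2.2 (b+1) (by omega)
      omega
    have hG := gap_master (K := k+1) hk1 (by omega) (bc_le hk1 ha) (bc_le hk1 hb) (x := b) (y := b')
    have hQ1 : A a' (k+1) b' + l < A a' (k+1) (b'+1) := by omega
    refine ⟨rfl, hQ1, ?_⟩
    have hna : A a k b + l < A (a+1) k 0 := by
      by_contra hcon
      have := hNF.2.2.1 (a+1) (by omega)
      omega
    have h5 : A (a+1) k 0 = A a k ((fun x => A a k x)^[k-1] 0) := A_succ_zero' hk1 a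
    have hb_lt : b < (fun x => A a k x)^[k-1] 0 := by
      have h13 : A a k b < A a k ((fun x => A a k x)^[k-1] 0) := by omega
      exact (A_strictMono_b hk1 a).lt_iff_lt.mp h13
    have hex : ∃ j, b < (fun x => A a k x)^[j] 0 := ⟨k-1, hb_lt⟩
    have hjb : b < (fun x => A a k x)^[Nat.find hex] 0 := Nat.find_spec hex
    have hjle : Nat.find hex ≤ k - 1 := Nat.find_min' hex hb_lt
    have hj0 : Nat.find hex ≠ 0 := by
      intro h0
      rw [h0] at hjb
      simp at hjb
    obtain ⟨i, hji⟩ : ∃ i, Nat.find hex = i + 1 := ⟨Nat.find hex - 1, by omega⟩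
    have hprev : ¬ b < (fun x => A a k x)^[i] 0 := Nat.find_min hex (by omega)
    have hTj_le : (fun x => A a k x)^[Nat.find hex] 0 ≤ A a k b := by
      rw [hji, Function.iterate_succ_apply']
      exact A_mono_b hk1 a (by omega)
    have hbcT := bc_tower hk2 ha (Nat.find hex) hjle
    have hb'lt : b' < (fun x => A a' (k+1) x)^[Nat.find hex] 0 := by
      rcases eq_or_lt_of_le (show (fun x => A a k x)^[Nat.find hex] 0 ≤ A a k b + l by omega)
        with heq | hlt
      · exact hM b (by omega) b' _ hb (heq ▸ hbcT)
      · exact (IH _ hlt).1 b hjb b' _ hb hbcT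
    have hb'k : b' < (fun x => A a' (k+1) x)^[k] 0 := by
      have h14 : (fun x => A a' (k+1) x)^[Nat.find hex] 0 ≤ (fun x => A a' (k+1) x)^[k] 0 :=
        (tower_strictMono (fun x => lt_A (k := k+1) (by omega) a' x)).monotone (by omega)
      omega
    have h6 : A a' (k+1) (b'+1) ≤ A a' (k+1) ((fun x => A a' (k+1) x)^[k] 0) :=
      A_mono_b (by omega) a' (by omega)
    have h7 : A (a'+1) (k+1) 0 = A a' (k+1) ((fun x => A a' (k+1) x)^[(k+1)-1] 0) :=
      A_succ_zero' (by omega) a'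
    rw [show (k+1)-1 = k from rfl] at h7
    omega

/-- Strict monotonicity of the base change: for `m > 0`,
`(m-1)[k←k+1] < m[k←k+1]`. -/
theorem base_change_strict_mono (k m p q : ℕ) (hk : 3 ≤ k) (hm : 0 < m)
    (hp : BC k (m - 1) p) (hq : BC k m q) : p < q :=
  (key hk m).1 (m - 1) (by omega) p q hp hq
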